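/- Let F be an integrable real random variable on a probability space (Ω, P), let γ denote the standard Gaussian measure N(0,1) on ℝ, let φ : ℝ → ℝ be of class C¹ with bounded derivative, and let t ∈ [0,1]. Then | ∫_Ω ∫_ℝ φ(√t·y + √(1−t)·F(ω)) dγ(y) dP(ω) − E[φ(F)] | ≤ √t · sup_x|φ'(x)| · ( √(2/π) + E[|F|] ). -/

import Mathlib

open MeasureTheory ProbabilityTheory Real Set
open scoped ENNReal NNReal

lemma ioi_moment : ∫ x in Set.Ioi (0:ℝ), x * rexp (-x^2/2) = 1 := by
  have hcont : ContinuousWithinAt (fun x : ℝ => -rexp (-x^2/2)) (Set.Ici 0) 0 := by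
    exact (Continuous.continuousWithinAt (by continuity))
  have hderiv : ∀ x ∈ Set.Ioi (0:ℝ), HasDerivAt (fun x : ℝ => -rexp (-x^2/2))
      (x * rexp (-x^2/2)) x := by
    intro x _
    have h : HasDerivAt (fun x : ℝ => -x^2/2) (-x) x := by
      have := (hasDerivAt_pow 2 x).neg.div_const 2
      simpa using this.congr_deriv (by ring)
    exact h.exp.neg.congr_deriv (by ring)
  have hint : IntegrableOn (fun x : ℝ => x * rexp (-x^2/2)) (Set.Ioi 0) := by
    have : Integrable fun x : ℝ => x * rexp (-(1/2) * x^2) :=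
      integrable_mul_exp_neg_mul_sq (by norm_num)
    refine (this.congr (by filter_upwards with x; ring_nf)).integrableOn
  have htend : Filter.Tendsto (fun x : ℝ => -rexp (-x^2/2)) Filter.atTop (nhds 0) := by
    rw [show (0:ℝ) = -0 by norm_num]
    refine Filter.Tendsto.neg ?_
    refine Real.tendsto_exp_atBot.comp ?_
    have : Filter.Tendsto (fun x : ℝ => x^2/2) Filter.atTop Filter.atTop := by
      exact (Filter.tendsto_pow_atTop (by norm_num)).atTop_div_const (by norm_num)
    simpa [neg_div] using Filter.tendsto_neg_atBot_iff.mpr this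
  have := integral_Ioi_of_hasDerivAt_of_tendsto hcont hderiv hint htend
  simpa using this

lemma line_abs_moment : ∫ x : ℝ, |x| * rexp (-x^2/2) = 2 := by
  have h := integral_comp_abs (f := fun x : ℝ => x * rexp (-x^2/2))
  rw [ioi_moment] at h
  calc ∫ x : ℝ, |x| * rexp (-x^2/2)
      = ∫ x : ℝ, |x| * rexp (-|x|^2/2) := by
        congr 1; ext x; rw [sq_abs]
    _ = 2 * 1 := h
    _ = 2 := by norm_num

lemma gauss_density : gaussianReal 0 1
    = MeasureTheory.volume.withDensity (fun x => ((gaussianPDFReal 0 1 x).toNNReal : ℝ≥0∞)) := by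
  rw [gaussianReal_of_var_ne_zero 0 one_ne_zero]
  rfl

lemma pdf_eq (x : ℝ) : gaussianPDFReal 0 1 x = (Real.sqrt (2*π))⁻¹ * rexp (-x^2/2) := by
  simp [gaussianPDFReal]

lemma pdf_meas : Measurable fun x => (gaussianPDFReal 0 1 x).toNNReal :=
  (measurable_gaussianPDFReal 0 1).real_toNNReal

lemma integrable_abs_gauss : Integrable (fun y : ℝ => |y|) (gaussianReal 0 1) := by
  rw [gauss_density, integrable_withDensity_iff_integrable_smul pdf_meas]
  have h1 : Integrable (fun x : ℝ => |x * rexp (-(1/2) * x^2)|) :=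
    (integrable_mul_exp_neg_mul_sq (by norm_num)).abs
  have h2 : Integrable (fun x : ℝ => (Real.sqrt (2*π))⁻¹ * |x * rexp (-(1/2) * x^2)|) :=
    h1.const_mul _
  refine h2.congr (Filter.Eventually.of_forall fun x => ?_)
  show _ = (gaussianPDFReal 0 1 x).toNNReal • |x|
  rw [NNReal.smul_def, Real.coe_toNNReal _ (gaussianPDFReal_nonneg 0 1 x), smul_eq_mul, pdf_eq]
  show (√(2 * π))⁻¹ * |x * rexp (-(1 / 2) * x ^ 2)| = _
  rw [abs_mul, abs_of_pos (Real.exp_pos _)]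
  ring_nf

lemma gauss_abs_moment : ∫ y, |y| ∂(gaussianReal 0 1) = Real.sqrt (2/π) := by
  rw [gauss_density, integral_withDensity_eq_integral_smul pdf_meas]
  have : ∫ x : ℝ, (gaussianPDFReal 0 1 x).toNNReal • |x|
      = ∫ x : ℝ, (Real.sqrt (2*π))⁻¹ * (|x| * rexp (-x^2/2)) := by
    congr 1; ext x
    rw [NNReal.smul_def, Real.coe_toNNReal _ (gaussianPDFReal_nonneg 0 1 x), smul_eq_mul, pdf_eq]
    ring
  rw [this, MeasureTheory.integral_const_mul, line_abs_moment]
  have hπ : (0:ℝ) < π := Real.pi_pos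
  rw [Real.sqrt_div (by norm_num) π, Real.sqrt_mul (by norm_num) π]
  rw [eq_div_iff (by positivity)]
  have h2 : Real.sqrt 2 * Real.sqrt 2 = 2 := Real.mul_self_sqrt (by norm_num)
  field_simp
  nlinarith [Real.sqrt_nonneg π, Real.sq_sqrt hπ.le, Real.sqrt_pos.mpr hπ]

theorem gaussian_smoothing_error
    {Ω : Type*} [MeasureSpace Ω] [IsProbabilityMeasure (ℙ : Measure Ω)]
    (F : Ω → ℝ) (hF : Integrable F ℙ)
    (φ : ℝ → ℝ) (hφ : ContDiff ℝ 1 φ) (hφ' : ∃ C : ℝ, ∀ x, |deriv φ x| ≤ C)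
    (t : ℝ) (ht : t ∈ Set.Icc (0 : ℝ) 1) :
    |(∫ ω, ∫ y, φ (Real.sqrt t * y + Real.sqrt (1 - t) * F ω) ∂(gaussianReal 0 1) ∂ℙ)
        - ∫ ω, φ (F ω) ∂ℙ|
      ≤ Real.sqrt t * (⨆ x, |deriv φ x|) * (Real.sqrt (2 / Real.pi) + ∫ ω, |F ω| ∂ℙ) := by
  obtain ⟨C, hC⟩ := hφ'
  obtain ⟨ht0, ht1⟩ := ht
  set M := ⨆ x, |deriv φ x| with hMdef
  have hbdd : BddAbove (Set.range fun x => |deriv φ x|) :=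
    ⟨C, by rintro y ⟨x, rfl⟩; exact hC x⟩
  have hM : ∀ x, |deriv φ x| ≤ M := fun x => le_ciSup hbdd x
  have hM0 : (0:ℝ) ≤ M := (abs_nonneg _).trans (hM 0)
  have hdiff : Differentiable ℝ φ := hφ.differentiable one_ne_zero
  have lip : ∀ a b : ℝ, |φ a - φ b| ≤ M * |a - b| := by
    intro a b
    have := Convex.norm_image_sub_le_of_norm_deriv_le (s := Set.univ)
      (fun x _ => hdiff x) (fun x _ => hM x) convex_univ (Set.mem_univ b) (Set.mem_univ a)
    simpa [Real.norm_eq_abs] using this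
  set s := Real.sqrt t with hsdef
  set u := Real.sqrt (1 - t) with hudef
  have hs0 : 0 ≤ s := Real.sqrt_nonneg t
  have hu0 : 0 ≤ u := Real.sqrt_nonneg _
  have hs2 : s^2 = t := Real.sq_sqrt ht0
  have hu2 : u^2 = 1 - t := Real.sq_sqrt (by linarith)
  have hu1 : u ≤ 1 := by nlinarith
  have hsu : 1 - u ≤ s := by nlinarith [mul_nonneg hs0 hu0]
  have hgrow : ∀ x : ℝ, |φ x| ≤ |φ 0| + M * |x| := by
    intro x
    have h1 : |φ x| ≤ |φ x - φ 0| + |φ 0| := by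
      have := abs_add_le (φ x - φ 0) (φ 0); simpa using this
    have h2 := lip x 0
    rw [sub_zero] at h2
    linarith
  have hpoint : ∀ (c y : ℝ), |φ (s * y + u * c) - φ c| ≤ M * s * |y| + M * s * |c| := by
    intro c y
    have h1 := lip (s * y + u * c) c
    have h2 : |s * y + u * c - c| ≤ s * |y| + s * |c| := by
      have he : s * y + u * c - c = s * y + (u - 1) * c := by ring
      rw [he]
      refine (abs_add_le _ _).trans ?_
      rw [abs_mul, abs_mul, abs_of_nonneg hs0]
      have h3 : |u - 1| ≤ s := by
        rw [abs_sub_comm, abs_of_nonneg (by linarith : (0:ℝ) ≤ 1 - u)]; exact hsu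
      gcongr
    nlinarith [abs_nonneg (s * y + u * c - c)]
  have hγabs : Integrable (fun y : ℝ => |y|) (gaussianReal 0 1) := integrable_abs_gauss
  have hinner : ∀ c : ℝ, Integrable (fun y => φ (s * y + u * c)) (gaussianReal 0 1) := by
    intro c
    refine Integrable.mono' (g := fun y => (|φ c| + M * s * |c|) + M * s * |y|)
      ((integrable_const _).add (hγabs.const_mul _))
      ((hφ.continuous.comp (by continuity)).aestronglyMeasurable)
      (Filter.Eventually.of_forall fun y => ?_)
    show |φ (s * y + u * c)| ≤ |φ c| + M * s * |c| + M * s * |y|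
    have h1 : |φ (s * y + u * c)| ≤ |φ (s * y + u * c) - φ c| + |φ c| := by
      have := abs_add_le (φ (s * y + u * c) - φ c) (φ c); simpa using this
    have h2 := hpoint c y
    linarith
  have key : ∀ c : ℝ, |(∫ y, φ (s * y + u * c) ∂(gaussianReal 0 1)) - φ c|
      ≤ M * s * (Real.sqrt (2/Real.pi) + |c|) := by
    intro c
    have h0 : φ c = ∫ _y, φ c ∂(gaussianReal 0 1) := by simp
    rw [h0, ← integral_sub (hinner c) (integrable_const _)]
    have hb : Integrable (fun y : ℝ => M * s * |y| + M * s * |c|) (gaussianReal 0 1) :=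
      (hγabs.const_mul _).add (integrable_const _)
    have h1 : |∫ y, (φ (s * y + u * c) - φ c) ∂(gaussianReal 0 1)|
        ≤ ∫ y, |φ (s * y + u * c) - φ c| ∂(gaussianReal 0 1) := by
      simpa [Real.norm_eq_abs] using
        norm_integral_le_integral_norm (fun y => φ (s * y + u * c) - φ c) (μ := gaussianReal 0 1)
    refine h1.trans ?_
    refine le_trans (integral_mono (((hinner c).sub (integrable_const _)).abs) hb
      (fun y => hpoint c y)) ?_
    rw [integral_add (hγabs.const_mul _) (integrable_const _), integral_const_mul,
      gauss_abs_moment, integral_const]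
    simp [mul_add]
  -- integrability of the two outer integrands
  have hφF : Integrable (fun ω => φ (F ω)) ℙ := by
    refine Integrable.mono' ((hF.abs.const_mul M).add (integrable_const |φ 0|))
      (hφ.continuous.comp_aestronglyMeasurable hF.1)
      (Filter.Eventually.of_forall fun ω => ?_)
    show |φ (F ω)| ≤ M * |F ω| + |φ 0|
    have := hgrow (F ω); linarith
  set G : ℝ → ℝ := fun c => ∫ y, φ (s * y + u * c) ∂(gaussianReal 0 1) with hGdef
  have hGlip : LipschitzWith ⟨M * u, mul_nonneg hM0 hu0⟩ G := by
    refine LipschitzWith.of_dist_le_mul fun c c' => ?_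
    rw [Real.dist_eq, Real.dist_eq]
    show |G c - G c'| ≤ M * u * |c - c'|
    rw [hGdef]
    simp only
    rw [← integral_sub (hinner c) (hinner c')]
    have h1 : |∫ y, (φ (s * y + u * c) - φ (s * y + u * c')) ∂(gaussianReal 0 1)|
        ≤ ∫ y, |φ (s * y + u * c) - φ (s * y + u * c')| ∂(gaussianReal 0 1) := by
      simpa [Real.norm_eq_abs] using
        norm_integral_le_integral_norm (fun y => φ (s * y + u * c) - φ (s * y + u * c'))
          (μ := gaussianReal 0 1)
    refine h1.trans ?_
    have h2 : ∀ y : ℝ, |φ (s * y + u * c) - φ (s * y + u * c')| ≤ M * u * |c - c'| := by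
      intro y
      have := lip (s * y + u * c) (s * y + u * c')
      have he : s * y + u * c - (s * y + u * c') = u * (c - c') := by ring
      rw [he, abs_mul, abs_of_nonneg hu0] at this
      nlinarith [abs_nonneg (c - c')]
    refine le_trans (integral_mono (((hinner c).sub (hinner c')).abs) (integrable_const _) h2) ?_
    simp
  have hg : Integrable (fun ω => ∫ y, φ (s * y + u * F ω) ∂(gaussianReal 0 1)) ℙ := by
    refine Integrable.mono'
      (g := fun ω => (M * s * (Real.sqrt (2/Real.pi) + |F ω|)) + (|φ 0| + M * |F ω|))
      ?_ (hGlip.continuous.comp_aestronglyMeasurable hF.1)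
      (Filter.Eventually.of_forall fun ω => ?_)
    · refine Integrable.add ?_ ?_
      · exact ((integrable_const _).add hF.abs).const_mul _
      · exact (integrable_const _).add (hF.abs.const_mul M)
    · rw [Real.norm_eq_abs]
      have h1 : |G (F ω)| ≤ |G (F ω) - φ (F ω)| + |φ (F ω)| := by
        have := abs_add_le (G (F ω) - φ (F ω)) (φ (F ω)); simpa using this
      have h2 := key (F ω)
      have h3 := hgrow (F ω)
      show |G (F ω)| ≤ _
      refine h1.trans ?_
      have h2' : |G (F ω) - φ (F ω)| ≤ M * s * (Real.sqrt (2/Real.pi) + |F ω|) := h2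
      linarith
  rw [← integral_sub hg hφF]
  have hbnd : Integrable (fun ω => M * s * (Real.sqrt (2/Real.pi) + |F ω|)) ℙ :=
    (((integrable_const _).add hF.abs).const_mul _)
  calc |∫ ω, ((∫ y, φ (s * y + u * F ω) ∂(gaussianReal 0 1)) - φ (F ω)) ∂ℙ|
      ≤ ∫ ω, |(∫ y, φ (s * y + u * F ω) ∂(gaussianReal 0 1)) - φ (F ω)| ∂ℙ := by
        simpa [Real.norm_eq_abs] using norm_integral_le_integral_norm
          (fun ω => (∫ y, φ (s * y + u * F ω) ∂(gaussianReal 0 1)) - φ (F ω)) (μ := ℙ)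
    _ ≤ ∫ ω, M * s * (Real.sqrt (2/Real.pi) + |F ω|) ∂ℙ :=
        integral_mono ((hg.sub hφF).abs) hbnd (fun ω => key (F ω))
    _ = M * s * (Real.sqrt (2/Real.pi) + ∫ ω, |F ω| ∂ℙ) := by
        rw [integral_const_mul, integral_add (integrable_const _) hF.abs, integral_const]
        simp
    _ ≤ s * M * (Real.sqrt (2/Real.pi) + ∫ ω, |F ω| ∂ℙ) := le_of_eq (by ring)
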